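/- Let m ≥ 1 and n = 2^m − 1. Then there exists an F₂-linear subspace V ⊆ F₂^n of dimension n − m (so |V| = 2^n/(n+1)) such that the uniform distribution X on V is ⌊n/2⌋-wise independent; in particular H(X) = n − log₂(n+1), so the entropy lower bound n − log₂(n+1) for ⌊n/2⌋-wise independent distributions is attained. -/

import Mathlib

open Finset

-- any family of ≥ 2^(m-1) distinct nonzero vectors in F2^m spans
lemma span_top_of_card {m : ℕ} (hm : 1 ≤ m) {ι : Type*} [Fintype ι]
    (c : ι → (Fin m → ZMod 2)) (hinj : Function.Injective c) (h0 : ∀ i, c i ≠ 0)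
    (hcard : 2 ^ (m - 1) ≤ Fintype.card ι) :
    Submodule.span (ZMod 2) (Set.range c) = ⊤ := by
  classical
  by_contra hW
  set W := Submodule.span (ZMod 2) (Set.range c) with hWdef
  have hlt : W < ⊤ := lt_top_iff_ne_top.mpr hW
  have hfin : Module.finrank (ZMod 2) W < m := by
    have := Submodule.finrank_lt (K := ZMod 2) hW
    simpa [Module.finrank_pi] using this
  have hcW : Fintype.card W = 2 ^ Module.finrank (ZMod 2) W :=
    Module.card_eq_pow_finrank (K := ZMod 2)
  have hcWle : Fintype.card W ≤ 2 ^ (m - 1) := by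
    rw [hcW]
    exact Nat.pow_le_pow_right (by norm_num) (by omega)
  -- injection ι → {w : W // w ≠ 0}
  have hmem : ∀ i, c i ∈ W := fun i => Submodule.subset_span ⟨i, rfl⟩
  let f : ι → {w : W // w ≠ 0} := fun i => ⟨⟨c i, hmem i⟩, by
    simp only [ne_eq, Submodule.mk_eq_zero]; exact h0 i⟩
  have hfinj : Function.Injective f := by
    intro i j hij
    apply hinj
    simpa [f, Subtype.ext_iff] using hij
  have hcle : Fintype.card ι ≤ Fintype.card {w : W // w ≠ 0} :=
    Fintype.card_le_of_injective f hfinj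
  have hne : Fintype.card {w : W // w ≠ 0} = Fintype.card W - 1 := by
    simp only [ne_eq]
    rw [Fintype.card_subtype_compl, Fintype.card_subtype_eq]
  have h1 : 1 ≤ Fintype.card W := Fintype.card_pos
  omega

lemma exists_off_support {m : ℕ} (hm : 1 ≤ m) {ι : Type*} [Fintype ι] [DecidableEq ι]
    (c : ι → (Fin m → ZMod 2)) (hinj : Function.Injective c) (h0 : ∀ i, c i ≠ 0)
    (S : Finset ι) (hS : 2 ^ (m - 1) ≤ Sᶜ.card) (b : Fin m → ZMod 2) :
    ∃ x : ι → ZMod 2, (∀ i ∈ S, x i = 0) ∧ ∑ i, x i • c i = b := by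
  classical
  set c' : (Sᶜ : Finset ι) → (Fin m → ZMod 2) := fun j => c j with hc'
  have hspan : Submodule.span (ZMod 2) (Set.range c') = ⊤ := by
    apply span_top_of_card hm c' (fun i j hij => Subtype.ext (hinj hij)) (fun i => h0 i)
    rw [Fintype.card_coe]; exact hS
  have hb : b ∈ Submodule.span (ZMod 2) (Set.range c') := hspan ▸ Submodule.mem_top
  obtain ⟨y, hy⟩ := (Submodule.mem_span_range_iff_exists_fun (ZMod 2)).mp hb
  refine ⟨fun i => if h : i ∈ Sᶜ then y ⟨i, h⟩ else 0, fun i hi => by simp [hi], ?_⟩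
  rw [← Finset.sum_subset (Finset.subset_univ Sᶜ)
    (by intro i _ hi; simp [hi])]
  rw [← Finset.sum_attach Sᶜ (fun i => (if h : i ∈ Sᶜ then y ⟨i, h⟩ else 0) • c i)]
  simpa [c'] using hy

open Classical in
theorem half_wise_indep_entropy_tight (m : ℕ) (hm : 1 ≤ m) :
    ∃ V : Submodule (ZMod 2) (Fin (2 ^ m - 1) → ZMod 2),
      Module.finrank (ZMod 2) V = 2 ^ m - 1 - m ∧
      (let p : (Fin (2 ^ m - 1) → ZMod 2) → ℝ :=
        fun x => if x ∈ V then 1 / (Nat.card V) else 0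
       (∀ S : Finset (Fin (2 ^ m - 1)), S.card ≤ (2 ^ m - 1) / 2 →
          ∀ a : Fin (2 ^ m - 1) → ZMod 2,
            (∑ x ∈ Finset.univ.filter fun x => ∀ i ∈ S, x i = a i, p x) =
              (1 / 2 : ℝ) ^ S.card) ∧
        (-∑ x, p x * Real.logb 2 (p x)) =
          ((2 ^ m - 1 : ℕ) : ℝ) - Real.logb 2 (((2 ^ m - 1 : ℕ) : ℝ) + 1)) := by
  classical
  set n : ℕ := 2 ^ m - 1 with hn
  have h2m : 2 ^ m = 2 ^ (m - 1) * 2 := by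
    conv_lhs => rw [show m = m - 1 + 1 by omega]
    rw [pow_succ]
  have h1n : 1 ≤ 2 ^ m := Nat.one_le_two_pow
  have hmn : m < 2 ^ m := Nat.lt_two_pow_self
  -- the nonzero columns
  have hcard_ne : Fintype.card {v : Fin m → ZMod 2 // v ≠ 0} = n := by
    simp only [ne_eq]
    rw [Fintype.card_subtype_compl, Fintype.card_subtype_eq]
    simp [hn]
  have hcardeq : Fintype.card (Fin n) = Fintype.card {v : Fin m → ZMod 2 // v ≠ 0} := by
    rw [hcard_ne, Fintype.card_fin]
  let c0 : Fin n ≃ {v : Fin m → ZMod 2 // v ≠ 0} := Fintype.equivOfCardEq hcardeq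
  set c : Fin n → (Fin m → ZMod 2) := fun i => (c0 i : Fin m → ZMod 2) with hc
  have hinj : Function.Injective c := fun i j hij => c0.injective (Subtype.ext hij)
  have h0 : ∀ i, c i ≠ 0 := fun i => (c0 i).2
  -- the parity-check map
  let A : (Fin n → ZMod 2) →ₗ[ZMod 2] (Fin m → ZMod 2) :=
    { toFun := fun x => ∑ i, x i • c i
      map_add' := by intro x y; simp [add_smul, Finset.sum_add_distrib]
      map_smul' := by intro r x; simp [mul_smul, Finset.smul_sum]
    }
  set V := LinearMap.ker A with hV
  -- surjectivity of A
  have hAsurj : Function.Surjective A := by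
    intro b
    obtain ⟨x, -, hx⟩ := exists_off_support hm c hinj h0 ∅
      (by rw [Finset.compl_empty, Finset.card_univ, Fintype.card_fin]; omega) b
    exact ⟨x, hx⟩
  have hrank : Module.finrank (ZMod 2) V = n - m := by
    have h1 := LinearMap.finrank_range_add_finrank_ker A
    rw [LinearMap.range_eq_top.mpr hAsurj, finrank_top, Module.finrank_fin_fun,
      Module.finrank_fin_fun, ← hV] at h1
    omega
  -- representative in each fiber
  have hrep : ∀ S : Finset (Fin n), S.card ≤ n / 2 → ∀ a : Fin n → ZMod 2,
      ∃ xa, xa ∈ V ∧ ∀ i ∈ S, xa i = a i := by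
    intro S hS a
    have hSc : 2 ^ (m - 1) ≤ Sᶜ.card := by
      rw [Finset.card_compl, Fintype.card_fin]
      omega
    set a' : Fin n → ZMod 2 := fun i => if i ∈ S then a i else 0 with ha'
    obtain ⟨z, hz0, hz⟩ := exists_off_support hm c hinj h0 S hSc (A a')
    have hAz : A z = A a' := hz
    refine ⟨a' - z, ?_, ?_⟩
    · simp [hV, LinearMap.mem_ker, map_sub, hAz]
    · intro i hi
      simp [ha', Pi.sub_apply, hz0 i hi, hi]
  -- all fibers have the same cardinality
  have hfib : ∀ (S : Finset (Fin n)) (xa xb : Fin n → ZMod 2), xa ∈ V → xb ∈ V →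
      (univ.filter fun x => x ∈ V ∧ ∀ i ∈ S, x i = xa i).card =
        (univ.filter fun x => x ∈ V ∧ ∀ i ∈ S, x i = xb i).card := by
    intro S xa xb hxa hxb
    refine Finset.card_bij' (fun x _ => x + xb - xa) (fun y _ => y + xa - xb) ?_ ?_ ?_ ?_
    · intro x hx
      rw [Finset.mem_filter] at hx ⊢
      obtain ⟨-, hxV, hxS⟩ := hx
      refine ⟨Finset.mem_univ _, V.sub_mem (V.add_mem hxV hxb) hxa, fun i hi => ?_⟩
      simp [Pi.sub_apply, Pi.add_apply, hxS i hi, add_sub_cancel_left]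
    · intro y hy
      rw [Finset.mem_filter] at hy ⊢
      obtain ⟨-, hyV, hyS⟩ := hy
      refine ⟨Finset.mem_univ _, V.sub_mem (V.add_mem hyV hxa) hxb, fun i hi => ?_⟩
      simp [Pi.sub_apply, Pi.add_apply, hyS i hi, add_sub_cancel_left]
    · intro x _; ring
    · intro y _; ring
  -- the counting identity
  have hcount : ∀ S : Finset (Fin n), S.card ≤ n / 2 → ∀ a : Fin n → ZMod 2,
      (univ.filter fun x : Fin n → ZMod 2 => x ∈ V).card =
        2 ^ S.card * (univ.filter fun x => x ∈ V ∧ ∀ i ∈ S, x i = a i).card := by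
    intro S hS a
    obtain ⟨xa, hxaV, hxa⟩ := hrep S hS a
    have hsplit := Finset.card_eq_sum_card_fiberwise
      (s := univ.filter fun x : Fin n → ZMod 2 => x ∈ V)
      (t := (univ : Finset ({i // i ∈ S} → ZMod 2)))
      (f := fun x j => x j.1) (fun x _ => Finset.mem_univ _)
    have hterm : ∀ r : {i // i ∈ S} → ZMod 2,
        ((univ.filter fun x : Fin n → ZMod 2 => x ∈ V).filter
          fun x => (fun j : {i // i ∈ S} => x j.1) = r).card =
        (univ.filter fun x => x ∈ V ∧ ∀ i ∈ S, x i = xa i).card := by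
      intro r
      obtain ⟨xr, hxrV, hxr⟩ := hrep S hS (fun i => if h : i ∈ S then r ⟨i, h⟩ else 0)
      have heq : ((univ.filter fun x : Fin n → ZMod 2 => x ∈ V).filter
          fun x => (fun j : {i // i ∈ S} => x j.1) = r) =
          (univ.filter fun x => x ∈ V ∧ ∀ i ∈ S, x i = xr i) := by
        ext x
        simp only [Finset.mem_filter, Finset.mem_univ, true_and, funext_iff]
        constructor
        · rintro ⟨hxV, hr⟩
          refine ⟨hxV, fun i hi => ?_⟩
          rw [hxr i hi]
          simpa [hi] using hr ⟨i, hi⟩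
        · rintro ⟨hxV, hr⟩
          refine ⟨hxV, fun j => ?_⟩
          have := hxr j.1 j.2
          rw [hr j.1 j.2, this]
          simp [j.2]
      rw [heq]
      exact hfib S xr xa hxrV hxaV
    rw [hsplit, Finset.sum_congr rfl fun r _ => hterm r, Finset.sum_const,
      Finset.card_univ, Fintype.card_fun, Fintype.card_coe, ZMod.card, smul_eq_mul]
    congr 1
    apply congrArg
    apply Finset.filter_congr
    intro x _
    simp only [eq_iff_iff, and_congr_right_iff]
    intro _
    exact ⟨fun h i hi => by rw [h i hi, hxa i hi], fun h i hi => by rw [h i hi, hxa i hi]⟩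
  -- cardinalities
  have hNV : Nat.card V = (univ.filter fun x : Fin n → ZMod 2 => x ∈ V).card := by
    rw [Nat.card_eq_fintype_card]
    exact Fintype.card_subtype _
  have hNpow : Nat.card V = 2 ^ (n - m) := by
    rw [Nat.card_eq_fintype_card, Module.card_eq_pow_finrank (K := ZMod 2), ZMod.card, hrank]
  have hNposn : 0 < Nat.card V := by rw [hNpow]; positivity
  have hN0 : (0:ℝ) < (Nat.card V : ℝ) := by exact_mod_cast hNposn
  refine ⟨V, hrank, ?_⟩
  intro p
  have hp : ∀ x, p x = if x ∈ V then (1 : ℝ) / (Nat.card V) else 0 := fun x => rfl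
  constructor
  · -- k-wise independence
    intro S hS a
    obtain ⟨xa, hxaV, hxa⟩ := hrep S hS a
    have hfilter : (univ.filter fun x : Fin n → ZMod 2 => ∀ i ∈ S, x i = a i).filter
        (fun x => x ∈ V) = univ.filter fun x => x ∈ V ∧ ∀ i ∈ S, x i = a i := by
      rw [Finset.filter_filter]
      apply Finset.filter_congr
      intro x _
      exact and_comm
    have hsum : (∑ x ∈ univ.filter fun x : Fin n → ZMod 2 => ∀ i ∈ S, x i = a i, p x)
        = ((univ.filter fun x => x ∈ V ∧ ∀ i ∈ S, x i = a i).card : ℝ) *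
            ((1 : ℝ) / (Nat.card V)) := by
      rw [Finset.sum_congr rfl fun x _ => hp x, ← Finset.sum_filter, hfilter,
        Finset.sum_const, nsmul_eq_mul]
    rw [hsum]
    have hFpos : 0 < (univ.filter fun x => x ∈ V ∧ ∀ i ∈ S, x i = a i).card := by
      refine Finset.card_pos.mpr ⟨xa, ?_⟩
      simp only [Finset.mem_filter, Finset.mem_univ, true_and]
      exact ⟨hxaV, hxa⟩
    have hFne : (((univ.filter fun x => x ∈ V ∧ ∀ i ∈ S, x i = a i).card : ℝ)) ≠ 0 :=
      ne_of_gt (by exact_mod_cast hFpos)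
    have hNeq : ((Nat.card V : ℝ))
        = 2 ^ S.card * ((univ.filter fun x => x ∈ V ∧ ∀ i ∈ S, x i = a i).card : ℝ) := by
      rw [hNV.trans (hcount S hS a)]
      push_cast
      ring
    rw [hNeq, mul_one_div, mul_comm ((2:ℝ) ^ S.card), ← div_div, div_self hFne,
      div_pow, one_pow]
  · -- entropy
    have hsum : (∑ x, p x * Real.logb 2 (p x))
        = ((univ.filter fun x : Fin n → ZMod 2 => x ∈ V).card : ℝ) *
            ((1 / (Nat.card V) : ℝ) * Real.logb 2 ((1 : ℝ) / (Nat.card V))) := by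
      rw [show (∑ x, p x * Real.logb 2 (p x)) = ∑ x, (if x ∈ V then
          ((1 / (Nat.card V) : ℝ)) * Real.logb 2 ((1 : ℝ) / (Nat.card V)) else 0) from
        Finset.sum_congr rfl fun x _ => by by_cases h : x ∈ V <;> simp [hp, h]]
      rw [← Finset.sum_filter, Finset.sum_const, nsmul_eq_mul]
    rw [hsum, ← hNV]
    have hNne : ((Nat.card ↥V : ℝ)) ≠ 0 := ne_of_gt hN0
    have key : -(((Nat.card ↥V : ℝ)) * ((1 / (Nat.card ↥V : ℝ)) *
        Real.logb 2 ((1 : ℝ) / (Nat.card ↥V : ℝ)))) = Real.logb 2 ((Nat.card ↥V : ℝ)) := by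
      rw [one_div, Real.logb_inv]
      field_simp
    rw [key]
    have hlog2 : Real.logb 2 (2 : ℝ) = 1 := Real.logb_self_eq_one (by norm_num)
    have hcastn : ((2 ^ m - 1 : ℕ) : ℝ) = 2 ^ m - 1 := by
      rw [Nat.cast_sub h1n]
      push_cast
      ring
    have h1 : Real.logb 2 ((Nat.card ↥V : ℝ)) = ((2 ^ m - 1 : ℕ) : ℝ) - (m : ℝ) := by
      rw [hNpow, Nat.cast_pow, Real.logb_pow, Nat.cast_sub (show m ≤ n by omega)]
      push_cast [hlog2]
      rw [hcastn]
      ring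
    rw [h1]
    have h2 : ((2 ^ m - 1 : ℕ) : ℝ) + 1 = (2 : ℝ) ^ m := by
      rw [hcastn]; ring
    rw [h2, Real.logb_pow, hlog2]
    ring
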